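/- Let a ∈ [0, 1] and let X₁, X₂ be independent with Pareto distribution G(a). Then for all x ≥ 4, P(X₁ + X₂ ≥ x/2) = 8(a+1)²((4a+x)² + 6(a+1)(x−4)) / ((4a+x)³(2a+x−2)) + 192(a+1)⁴/(4a+x)⁴ · log((2a+x−2)/(2a+2)). -/

import Mathlib

open MeasureTheory ProbabilityTheory Set


noncomputable def parF (a t : ℝ) (u : ℝ) : ℝ :=
  2*(a+1)^4 * ( -1/(2*(2*a+t)^2*(a+u)^2) - 2/((2*a+t)^3*(a+u))
    + 3/(2*a+t)^4 * (Real.log (a+u) - Real.log (a+t-u)) + 1/((2*a+t)^3*(a+t-u)) )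

lemma key_integral (a t : ℝ) (ha : 0 ≤ a) (ht : 2 ≤ t) :
    ∫ u in (1:ℝ)..(t-1), (a+1)^2/(a+t-u)^2 * (2*(a+1)^2/(a+u)^3)
      = parF a t (t-1) - parF a t 1 := by
  have h1t : (1:ℝ) ≤ t - 1 := by linarith
  have huIcc : uIcc (1:ℝ) (t-1) = Icc 1 (t-1) := uIcc_of_le h1t
  apply intervalIntegral.integral_eq_sub_of_hasDerivAt
  · intro u hu
    rw [huIcc, mem_Icc] at hu
    have hw : 0 < a + u := by linarith
    have hv : 0 < a + t - u := by linarith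
    have hc : 0 < 2*a + t := by linarith
    have hw' : a + u ≠ 0 := ne_of_gt hw
    have hv' : a + t - u ≠ 0 := ne_of_gt hv
    have hc' : 2*a + t ≠ 0 := ne_of_gt hc
    have hW : HasDerivAt (fun u : ℝ => a + u) 1 u := (hasDerivAt_id u).const_add a
    have hV : HasDerivAt (fun u : ℝ => a + t - u) (-1) u := by
      simpa using ((hasDerivAt_id u).const_sub (a + t))
    have hW2 : HasDerivAt (fun u : ℝ => (a + u)^2) (2*(a+u)) u := by
      simpa using hW.fun_pow 2
    have hW2ne : ((a+u)^2 : ℝ) ≠ 0 := pow_ne_zero 2 hw'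
    have d1 : HasDerivAt (fun u : ℝ => -1/(2*(2*a+t)^2*(a+u)^2))
        (2*(a+u) / (2*(2*a+t)^2*((a+u)^2)^2)) u := by
      have h1 := (hW2.fun_inv hW2ne).const_mul (-1/(2*(2*a+t)^2))
      convert h1 using 1
      all_goals first
        | rfl
        | (funext z; field_simp; try ring)
        | (field_simp; try ring)
    have d2 : HasDerivAt (fun u : ℝ => 2/((2*a+t)^3*(a+u)))
        (-2 / ((2*a+t)^3*(a+u)^2)) u := by
      have h0 : HasDerivAt (fun u : ℝ => (a+u)⁻¹) (-1 / (a+u)^2) u := by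
        simpa using hW.fun_inv hw'
      have h1 := h0.const_mul (2/((2*a+t)^3))
      convert h1 using 1
      all_goals first
        | rfl
        | (funext z; field_simp; try ring)
        | (field_simp; try ring)
    have d3 : HasDerivAt (fun u : ℝ => 3/(2*a+t)^4 * (Real.log (a+u) - Real.log (a+t-u)))
        (3/(2*a+t)^4 * (1/(a+u) + 1/(a+t-u))) u := by
      have hl1 : HasDerivAt (fun u : ℝ => Real.log (a+u)) (1/(a+u)) u := by
        simpa using hW.log hw'
      have hl2 : HasDerivAt (fun u : ℝ => Real.log (a+t-u)) (-1/(a+t-u)) u := by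
        have := hV.log hv'
        convert this using 1
        all_goals first
          | rfl
          | (funext z; field_simp; try ring)
          | (field_simp; try ring)
      have := (hl1.sub hl2).const_mul (3/(2*a+t)^4)
      convert this using 1
      all_goals first
        | rfl
        | (funext z; field_simp; try ring)
        | (field_simp; try ring)
    have d4 : HasDerivAt (fun u : ℝ => 1/((2*a+t)^3*(a+t-u)))
        (1 / ((2*a+t)^3*(a+t-u)^2)) u := by
      have h1 := (hV.fun_inv hv').const_mul (1/((2*a+t)^3))
      convert h1 using 1
      all_goals first
        | rfl
        | (funext z; field_simp; try ring)
        | (field_simp; try ring)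
    have total := ((((d1.sub d2).add d3).add d4).const_mul (2*(a+1)^4))
    have hfun : (fun u : ℝ => parF a t u) = fun u : ℝ =>
        2*(a+1)^4 * ( -1/(2*(2*a+t)^2*(a+u)^2) - 2/((2*a+t)^3*(a+u))
          + 3/(2*a+t)^4 * (Real.log (a+u) - Real.log (a+t-u)) + 1/((2*a+t)^3*(a+t-u)) ) := by
      funext z; simp [parF]
    show HasDerivAt (fun u => parF a t u) _ u
    rw [hfun]
    convert total using 1
    · rfl
    · rfl
    · rfl
    have e1 : ((a+u)^2)^2 = (a+u)^4 := by ring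
    field_simp
    ring
  · apply ContinuousOn.intervalIntegrable
    apply ContinuousOn.mul
    · apply continuousOn_const.div
      · fun_prop
      · intro u hu; rw [huIcc, mem_Icc] at hu
        have : 0 < a + t - u := by linarith
        positivity
    · apply continuousOn_const.div
      · fun_prop
      · intro u hu; rw [huIcc, mem_Icc] at hu
        have : 0 < a + u := by linarith
        positivity

/-- the candidate law: density `2(a+1)²/(a+y)³` on `(1,∞)` -/
noncomputable def parMeasure (a : ℝ) : Measure ℝ :=
  (volume.restrict (Set.Ioi 1)).withDensity (fun y => ENNReal.ofReal (2*(a+1)^2/(a+y)^3))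

lemma parDens_meas (a : ℝ) : Measurable (fun y : ℝ => ENNReal.ofReal (2*(a+1)^2/(a+y)^3)) := by
  apply ENNReal.measurable_ofReal.comp
  exact Measurable.div measurable_const ((measurable_const.add measurable_id).pow_const 3)

lemma ftc_small (a : ℝ) (ha : 0 ≤ a) {b c : ℝ} (hb : 1 ≤ b) (hbc : b ≤ c) :
    ∫ y in b..c, 2*(a+1)^2/(a+y)^3 = (a+1)^2/(a+b)^2 - (a+1)^2/(a+c)^2 := by
  have huIcc : uIcc b c = Icc b c := uIcc_of_le hbc
  have h : ∫ y in b..c, 2*(a+1)^2/(a+y)^3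
      = (fun y => -((a+1)^2/(a+y)^2)) c - (fun y => -((a+1)^2/(a+y)^2)) b := by
    apply intervalIntegral.integral_eq_sub_of_hasDerivAt
    · intro y hy
      rw [huIcc, mem_Icc] at hy
      have hw : 0 < a + y := by linarith
      have hW : HasDerivAt (fun y : ℝ => a + y) 1 y := (hasDerivAt_id y).const_add a
      have hW2 : HasDerivAt (fun y : ℝ => (a + y)^2) (2*(a+y)) y := by simpa using hW.fun_pow 2
      have h0 := (hW2.fun_inv (pow_ne_zero 2 hw.ne')).const_mul (-(a+1)^2)
      convert h0 using 1
      · rfl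
      · funext z; field_simp
      · field_simp
    · apply ContinuousOn.intervalIntegrable
      apply continuousOn_const.div
      · fun_prop
      · intro y hy; rw [huIcc, mem_Icc] at hy
        have : 0 < a + y := by linarith
        positivity
  rw [h]; ring

lemma parMeasure_Iic_le (a x : ℝ) (hx : x ≤ 1) : parMeasure a (Iic x) = 0 := by
  rw [parMeasure, withDensity_apply _ measurableSet_Iic,
    Measure.restrict_restrict measurableSet_Iic]
  have : Iic x ∩ Ioi 1 = ∅ := by
    ext y; simp only [mem_inter_iff, mem_Iic, mem_Ioi, mem_empty_iff_false, iff_false]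
    rintro ⟨h1, h2⟩; linarith
  rw [this]; simp

lemma parMeasure_Iic (a x : ℝ) (ha : 0 ≤ a) (hx : 1 ≤ x) :
    parMeasure a (Iic x) = ENNReal.ofReal (1 - (a+1)^2/(a+x)^2) := by
  rw [parMeasure, withDensity_apply _ measurableSet_Iic,
    Measure.restrict_restrict measurableSet_Iic]
  have hset : Iic x ∩ Ioi 1 = Ioc 1 x := by
    ext y; simp only [mem_inter_iff, mem_Iic, mem_Ioi, mem_Ioc]; tauto
  rw [hset]
  have hcont : ContinuousOn (fun y : ℝ => 2*(a+1)^2/(a+y)^3) (Icc 1 x) := by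
    apply continuousOn_const.div
    · fun_prop
    · intro y hy; rw [mem_Icc] at hy
      have : 0 < a + y := by linarith
      positivity
  have hint : IntegrableOn (fun y : ℝ => 2*(a+1)^2/(a+y)^3) (Ioc 1 x) :=
    (hcont.integrableOn_Icc).mono_set Ioc_subset_Icc_self
  have hnn : 0 ≤ᵐ[volume.restrict (Ioc 1 x)] (fun y : ℝ => 2*(a+1)^2/(a+y)^3) := by
    filter_upwards [ae_restrict_mem measurableSet_Ioc] with y hy
    rw [mem_Ioc] at hy
    have : 0 < a + y := by linarith
    positivity
  rw [← ofReal_integral_eq_lintegral_ofReal hint hnn,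
    ← intervalIntegral.integral_of_le hx, ftc_small a ha le_rfl hx]
  congr 1
  have h1 : (0:ℝ) < a + 1 := by linarith
  field_simp

lemma parMeasure_singleton (a s : ℝ) : parMeasure a {s} = 0 := by
  rw [parMeasure, withDensity_apply _ (measurableSet_singleton s),
    Measure.restrict_restrict (measurableSet_singleton s)]
  apply setLIntegral_measure_zero
  exact measure_mono_null inter_subset_left (measure_singleton s)

lemma parMeasure_univ (a : ℝ) (ha : 0 ≤ a) : parMeasure a univ = 1 := by
  have hU : (univ : Set ℝ) = ⋃ n : ℕ, Iic (1 + n : ℝ) := by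
    ext y; simp only [mem_univ, mem_iUnion, mem_Iic, true_iff]
    obtain ⟨n, hn⟩ := exists_nat_ge y
    exact ⟨n, by linarith⟩
  have hmono : Monotone (fun n : ℕ => Iic (1 + n : ℝ)) := by
    intro n m hnm
    apply Iic_subset_Iic.mpr
    have : (n:ℝ) ≤ m := Nat.cast_le.mpr hnm
    linarith
  rw [hU, Directed.measure_iUnion hmono.directed_le]
  have hmono2 : Monotone (fun n : ℕ => parMeasure a (Iic (1 + n : ℝ))) :=
    fun n m h => measure_mono (hmono h)
  refine tendsto_nhds_unique (tendsto_atTop_iSup hmono2) ?_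
  have hreal : Filter.Tendsto (fun n : ℕ => 1 - (a+1)^2/(a+(1+n))^2) Filter.atTop (nhds 1) := by
    have hd : Filter.Tendsto (fun n : ℕ => (a+(1+(n:ℝ)))^2) Filter.atTop Filter.atTop := by
      have h1 : Filter.Tendsto (fun n : ℕ => a+(1+(n:ℝ))) Filter.atTop Filter.atTop :=
        Filter.tendsto_atTop_add_const_left _ _
          (Filter.tendsto_atTop_add_const_left _ _ tendsto_natCast_atTop_atTop)
      exact (Filter.tendsto_pow_atTop (by norm_num)).comp h1
    have := Filter.Tendsto.div_atTop (tendsto_const_nhds (x := (a+1)^2)) hd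
    simpa using (tendsto_const_nhds (x := (1:ℝ))).sub this
  have : Filter.Tendsto (fun n : ℕ => parMeasure a (Iic (1 + n : ℝ))) Filter.atTop
      (nhds (ENNReal.ofReal 1)) := by
    have heq : ∀ n : ℕ, parMeasure a (Iic (1 + n : ℝ))
        = ENNReal.ofReal (1 - (a+1)^2/(a+(1+n))^2) := by
      intro n
      rw [parMeasure_Iic a _ ha (le_add_of_nonneg_right (Nat.cast_nonneg n))]
    simp only [heq]
    exact (ENNReal.continuous_ofReal.tendsto 1).comp hreal
  simpa using this

lemma parMeasure_Iio (a s : ℝ) (ha : 0 ≤ a) (hs : 1 ≤ s) :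
    parMeasure a (Iio s) = ENNReal.ofReal (1 - (a+1)^2/(a+s)^2) := by
  have h : Iic s = Iio s ∪ {s} := by
    ext y; simp only [mem_Iic, mem_union, mem_Iio, mem_singleton_iff]
    constructor
    · intro hy; rcases lt_or_eq_of_le hy with h | h; exacts [Or.inl h, Or.inr h]
    · rintro (h | h) <;> simp [le_of_lt, h]
  have := parMeasure_Iic a s ha hs
  rw [h, measure_union (by simp) (measurableSet_singleton s), parMeasure_singleton,
    add_zero] at this
  exact this

lemma parMeasure_prob (a : ℝ) (ha : 0 ≤ a) : IsProbabilityMeasure (parMeasure a) :=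
  ⟨parMeasure_univ a ha⟩

lemma ofReal_one_sub (r : ℝ) (h0 : 0 ≤ r) (h1 : r ≤ 1) :
    ENNReal.ofReal (1 - r) = 1 - ENNReal.ofReal r := by
  rw [ENNReal.ofReal_sub _ h0, ENNReal.ofReal_one]

lemma tail_le_one (a s : ℝ) (ha : 0 ≤ a) (hs : 1 ≤ s) : (a+1)^2/(a+s)^2 ≤ 1 := by
  rw [div_le_one (by positivity)]
  have : a + 1 ≤ a + s := by linarith
  have h1 : (0:ℝ) < a + 1 := by linarith
  nlinarith

lemma parMeasure_Ici_le (a s : ℝ) (ha : 0 ≤ a) (hs : s ≤ 1) : parMeasure a (Ici s) = 1 := by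
  haveI := parMeasure_prob a ha
  have h : Ici s = (Iio s)ᶜ := compl_Iio.symm
  rw [h, measure_compl measurableSet_Iio (measure_ne_top _ _)]
  have h0 : parMeasure a (Iio s) = 0 :=
    measure_mono_null (fun y hy => le_of_lt (lt_of_lt_of_le hy hs)) (parMeasure_Iic_le a 1 le_rfl)
  rw [h0, measure_univ, tsub_zero]

lemma parMeasure_Ici (a s : ℝ) (ha : 0 ≤ a) (hs : 1 ≤ s) :
    parMeasure a (Ici s) = ENNReal.ofReal ((a+1)^2/(a+s)^2) := by
  haveI := parMeasure_prob a ha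
  have h : Ici s = (Iio s)ᶜ := compl_Iio.symm
  have hr0 : (0:ℝ) ≤ (a+1)^2/(a+s)^2 := by positivity
  rw [h, measure_compl measurableSet_Iio (measure_ne_top _ _), measure_univ,
    parMeasure_Iio a s ha hs, ofReal_one_sub _ hr0 (tail_le_one a s ha hs),
    ENNReal.sub_sub_cancel ENNReal.one_ne_top]
  exact ENNReal.ofReal_le_one.mpr (tail_le_one a s ha hs)

lemma parMeasure_Ioi (a s : ℝ) (ha : 0 ≤ a) (hs : 1 ≤ s) :
    parMeasure a (Ioi s) = ENNReal.ofReal ((a+1)^2/(a+s)^2) := by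
  have h : Ici s = {s} ∪ Ioi s := by
    ext y; simp only [mem_Ici, mem_union, mem_singleton_iff, mem_Ioi]
    constructor
    · intro hy; rcases eq_or_lt_of_le hy with h | h; exacts [Or.inl h.symm, Or.inr h]
    · rintro (h | h) <;> simp [h, le_of_lt]
  have := parMeasure_Ici a s ha hs
  rw [h, measure_union (by simp) measurableSet_Ioi, parMeasure_singleton, zero_add] at this
  exact this

/-- the tail at strict inequality, via continuity from the right -/
lemma measure_lt_tail {Ω : Type*} [MeasurableSpace Ω] (μ : Measure Ω) [IsProbabilityMeasure μ]
    (X : Ω → ℝ) (a : ℝ) (ha : 0 ≤ a)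
    (ht : ∀ x : ℝ, 1 ≤ x → μ {ω | x ≤ X ω} = ENNReal.ofReal ((a + 1) ^ 2 / (a + x) ^ 2))
    (s : ℝ) (hs : 1 ≤ s) :
    μ {ω | s < X ω} = ENNReal.ofReal ((a+1)^2/(a+s)^2) := by
  have hU : {ω | s < X ω} = ⋃ n : ℕ, {ω | s + 1/(n+1) ≤ X ω} := by
    ext ω; simp only [mem_setOf_eq, mem_iUnion]
    constructor
    · intro h
      obtain ⟨n, hn⟩ := exists_nat_one_div_lt (sub_pos.mpr h)
      exact ⟨n, by push_cast at hn ⊢; linarith⟩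
    · rintro ⟨n, hn⟩
      have : (0:ℝ) < 1/((n:ℝ)+1) := by positivity
      linarith
  have hmono : Monotone (fun n : ℕ => {ω | s + 1/((n:ℝ)+1) ≤ X ω}) := by
    intro n m hnm ω hω
    simp only [mem_setOf_eq] at hω ⊢
    have h1 : 1/((m:ℝ)+1) ≤ 1/((n:ℝ)+1) := by
      apply one_div_le_one_div_of_le (by positivity)
      have : (n:ℝ) ≤ m := Nat.cast_le.mpr hnm
      linarith
    linarith
  rw [hU, Directed.measure_iUnion hmono.directed_le]
  have heq : ∀ n : ℕ, μ {ω | s + 1/((n:ℝ)+1) ≤ X ω}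
      = ENNReal.ofReal ((a+1)^2/(a+(s+1/((n:ℝ)+1)))^2) := fun n =>
    ht _ (le_add_of_le_of_nonneg hs (by positivity))
  simp only [heq]
  have hmono2 : Monotone (fun n : ℕ => ENNReal.ofReal ((a+1)^2/(a+(s+1/((n:ℝ)+1)))^2)) := by
    intro n m hnm
    apply ENNReal.ofReal_le_ofReal
    have h1 : 1/((m:ℝ)+1) ≤ 1/((n:ℝ)+1) := by
      apply one_div_le_one_div_of_le (by positivity)
      have : (n:ℝ) ≤ m := Nat.cast_le.mpr hnm
      linarith
    have h2 : (0:ℝ) < a + (s + 1/((m:ℝ)+1)) := by positivity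
    gcongr <;> linarith
  refine tendsto_nhds_unique (tendsto_atTop_iSup hmono2) ?_
  have hreal : Filter.Tendsto (fun n : ℕ => (a+1)^2/(a+(s+1/((n:ℝ)+1)))^2)
      Filter.atTop (nhds ((a+1)^2/(a+s)^2)) := by
    have h0 : Filter.Tendsto (fun n : ℕ => a+(s+1/((n:ℝ)+1))) Filter.atTop (nhds (a+s)) := by
      have := tendsto_one_div_add_atTop_nhds_zero_nat (𝕜 := ℝ)
      have h2 := (tendsto_const_nhds (x := a+s)).add this
      simpa [add_assoc] using h2
    have hne : ((a+s)^2 : ℝ) ≠ 0 := by positivity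
    exact (tendsto_const_nhds).div (h0.pow 2) hne
  exact (ENNReal.continuous_ofReal.tendsto _).comp hreal

lemma map_eq_parMeasure {Ω : Type*} [MeasurableSpace Ω] (μ : Measure Ω) [IsProbabilityMeasure μ]
    (X : Ω → ℝ) (hm : Measurable X) (a : ℝ) (ha : 0 ≤ a)
    (ht : ∀ x : ℝ, 1 ≤ x → μ {ω | x ≤ X ω} = ENNReal.ofReal ((a + 1) ^ 2 / (a + x) ^ 2))
    (hs : μ {ω | X ω < 1} = 0) :
    μ.map X = parMeasure a := by
  haveI := parMeasure_prob a ha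
  haveI : IsProbabilityMeasure (μ.map X) := Measure.isProbabilityMeasure_map hm.aemeasurable
  apply Measure.ext_of_Iic
  intro x
  rw [Measure.map_apply hm measurableSet_Iic]
  rcases lt_or_ge x 1 with hx | hx
  · rw [parMeasure_Iic_le a x (le_of_lt hx)]
    apply measure_mono_null _ hs
    intro ω hω
    simp only [mem_preimage, mem_Iic] at hω
    exact lt_of_le_of_lt hω hx
  · have hcompl : X ⁻¹' Iic x = {ω | x < X ω}ᶜ := by
      ext ω; simp [not_lt]
    have hmeas : MeasurableSet {ω | x < X ω} := hm measurableSet_Ioi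
    rw [hcompl, measure_compl hmeas (measure_ne_top _ _), measure_univ,
      measure_lt_tail μ X a ha ht x hx, parMeasure_Iic a x ha hx,
      ofReal_one_sub _ (by positivity) (tail_le_one a x ha hx)]

lemma rat_id (p q : ℝ) (hp : 0 < p) (hq : 0 < q) :
    2*p^4*(-1/(2*(p+q)^2*q^2) - 2/((p+q)^3*q) + 1/((p+q)^3*p))
      - 2*p^4*(-1/(2*(p+q)^2*p^2) - 2/((p+q)^3*p) + 1/((p+q)^3*q)) + p^2/q^2
    = 8*p^2*((2*(p+q))^2 + 6*p*(2*q-2*p)) / ((2*(p+q))^3*(2*q)) := by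
  have hpq : (0:ℝ) < p + q := by linarith
  have e1 := hp.ne'
  have e2 := hq.ne'
  have e3 := hpq.ne'
  field_simp
  ring

lemma final_algebra (a x : ℝ) (ha0 : 0 ≤ a) (hx : 4 ≤ x) :
    (parF a (x/2) (x/2-1) - parF a (x/2) 1) + (a+1)^2/(a+(x/2-1))^2
      = 8 * (a + 1) ^ 2 * ((4 * a + x) ^ 2 + 6 * (a + 1) * (x - 4)) /
          ((4 * a + x) ^ 3 * (2 * a + x - 2)) +
        192 * (a + 1) ^ 4 / (4 * a + x) ^ 4 * Real.log ((2 * a + x - 2) / (2 * a + 2)) := by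
  have h1 : (0:ℝ) < a+1 := by linarith
  have h2 : (0:ℝ) < a + x/2 - 1 := by linarith
  have h6 : (0:ℝ) < 2*a + 2 := by linarith
  have elog : Real.log ((2*a+x-2)/(2*a+2)) = Real.log (a+x/2-1) - Real.log (a+1) := by
    rw [show (2*a+x-2)/(2*a+2) = (a+x/2-1)/(a+1) from by
        rw [div_eq_div_iff h6.ne' h1.ne']; ring,
      Real.log_div h2.ne' h1.ne']
  have key1 : (12:ℝ)*(a+1)^4/(2*a+x/2)^4 = 192*(a+1)^4/(4*a+x)^4 := by
    rw [div_eq_div_iff (by positivity) (by positivity)]; ring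
  have key2 := rat_id (a+1) (a+x/2-1) h1 h2
  rw [show (2:ℝ)*((a+1)+(a+x/2-1)) = 4*a+x from by ring,
    show (2:ℝ)*(a+x/2-1)-2*(a+1) = x-4 from by ring,
    show (2:ℝ)*(a+x/2-1) = 2*a+x-2 from by ring] at key2
  simp only [parF]
  rw [show a + (x/2-1) = a + x/2 - 1 from by ring,
    show a + x/2 - (x/2-1) = a + 1 from by ring, elog]
  calc 2*(a+1)^4 * ( -1/(2*(2*a+x/2)^2*(a+x/2-1)^2) - 2/((2*a+x/2)^3*(a+x/2-1))
          + 3/(2*a+x/2)^4 * (Real.log (a+x/2-1) - Real.log (a+1)) + 1/((2*a+x/2)^3*(a+1)) )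
        - 2*(a+1)^4 * ( -1/(2*(2*a+x/2)^2*(a+1)^2) - 2/((2*a+x/2)^3*(a+1))
          + 3/(2*a+x/2)^4 * (Real.log (a+1) - Real.log (a+x/2-1)) + 1/((2*a+x/2)^3*(a+x/2-1)) )
        + (a+1)^2/(a+x/2-1)^2
      = (2*(a+1)^4*(-1/(2*((a+1)+(a+x/2-1))^2*(a+x/2-1)^2) - 2/(((a+1)+(a+x/2-1))^3*(a+x/2-1))
            + 1/(((a+1)+(a+x/2-1))^3*(a+1)))
          - 2*(a+1)^4*(-1/(2*((a+1)+(a+x/2-1))^2*(a+1)^2) - 2/(((a+1)+(a+x/2-1))^3*(a+1))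
            + 1/(((a+1)+(a+x/2-1))^3*(a+x/2-1))) + (a+1)^2/(a+x/2-1)^2)
        + (12*(a+1)^4/(2*a+x/2)^4) * (Real.log (a+x/2-1) - Real.log (a+1)) := by ring
    _ = 8 * (a + 1) ^ 2 * ((4 * a + x) ^ 2 + 6 * (a + 1) * (x - 4)) /
          ((4 * a + x) ^ 3 * (2 * a + x - 2)) +
        192 * (a + 1) ^ 4 / (4 * a + x) ^ 4 * (Real.log (a+x/2-1) - Real.log (a+1)) := by
        rw [key1, key2]

/-- Let `a ∈ [0, 1]` and `X₁, X₂` be independent with Pareto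
distribution `G(a)` on `[1, ∞)` (`P(Xᵢ ≥ x) = (a + 1)²/(a + x)²` for `x ≥ 1`). Then for
all `x ≥ 4`,
`P(X₁ + X₂ ≥ x/2) = 8(a+1)²((4a+x)² + 6(a+1)(x−4)) / ((4a+x)³(2a+x−2))
  + 192(a+1)⁴/(4a+x)⁴ · log((2a+x−2)/(2a+2))`. -/
theorem pareto_convolution_tail
    (a : ℝ) (ha : a ∈ Set.Icc (0 : ℝ) 1)
    {Ω : Type*} [MeasurableSpace Ω] (μ : Measure Ω) [IsProbabilityMeasure μ]
    (X₁ X₂ : Ω → ℝ) (hm₁ : Measurable X₁) (hm₂ : Measurable X₂)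
    (hindep : IndepFun X₁ X₂ μ)
    (ht₁ : ∀ x : ℝ, 1 ≤ x → μ {ω | x ≤ X₁ ω} =
      ENNReal.ofReal ((a + 1) ^ 2 / (a + x) ^ 2))
    (ht₂ : ∀ x : ℝ, 1 ≤ x → μ {ω | x ≤ X₂ ω} =
      ENNReal.ofReal ((a + 1) ^ 2 / (a + x) ^ 2))
    (hs₁ : μ {ω | X₁ ω < 1} = 0) (hs₂ : μ {ω | X₂ ω < 1} = 0) :
    ∀ x : ℝ, 4 ≤ x →
      μ {ω | x / 2 ≤ X₁ ω + X₂ ω} =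
        ENNReal.ofReal
          (8 * (a + 1) ^ 2 * ((4 * a + x) ^ 2 + 6 * (a + 1) * (x - 4)) /
              ((4 * a + x) ^ 3 * (2 * a + x - 2)) +
            192 * (a + 1) ^ 4 / (4 * a + x) ^ 4 *
              Real.log ((2 * a + x - 2) / (2 * a + 2))) := by
  intro x hx
  obtain ⟨ha0, ha1⟩ := ha
  haveI := parMeasure_prob a ha0
  have h2t : (2:ℝ) ≤ x/2 := by linarith
  have h1t : (1:ℝ) ≤ x/2 - 1 := by linarith
  have hprod : μ.map (fun ω => (X₁ ω, X₂ ω)) = (parMeasure a).prod (parMeasure a) := by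
    rw [(indepFun_iff_map_prod_eq_prod_map_map hm₁.aemeasurable hm₂.aemeasurable).mp hindep,
      map_eq_parMeasure μ X₁ hm₁ a ha0 ht₁ hs₁, map_eq_parMeasure μ X₂ hm₂ a ha0 ht₂ hs₂]
  have hSmeas : MeasurableSet {p : ℝ × ℝ | x/2 ≤ p.1 + p.2} :=
    measurableSet_le measurable_const (measurable_fst.add measurable_snd)
  have h1 : μ {ω | x/2 ≤ X₁ ω + X₂ ω}
      = ((parMeasure a).prod (parMeasure a)) {p : ℝ × ℝ | x/2 ≤ p.1 + p.2} := by
    rw [← hprod, Measure.map_apply (hm₁.prodMk hm₂) hSmeas]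
    rfl
  rw [h1, Measure.prod_apply hSmeas]
  have hpre : ∀ u : ℝ, (Prod.mk u ⁻¹' {p : ℝ × ℝ | x/2 ≤ p.1 + p.2}) = Ici (x/2 - u) := by
    intro u; ext v
    simp only [mem_preimage, mem_setOf_eq, mem_Ici]
    constructor <;> intro h <;> linarith
  simp only [hpre]
  set G : ℝ → ENNReal := fun u =>
    if u ≤ x/2 - 1 then ENNReal.ofReal ((a+1)^2/(a+(x/2-u))^2) else 1 with hGdef
  have hG : ∀ u : ℝ, parMeasure a (Ici (x/2 - u)) = G u := by
    intro u
    by_cases hu : u ≤ x/2 - 1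
    · rw [hGdef]; simp only [if_pos hu]
      exact parMeasure_Ici a _ ha0 (by linarith)
    · rw [hGdef]; simp only [if_neg hu]
      push_neg at hu
      exact parMeasure_Ici_le a _ ha0 (by linarith)
  simp only [hG]
  have hGmeas : Measurable G := by
    rw [hGdef]
    apply Measurable.ite (measurableSet_le measurable_id measurable_const) _ measurable_const
    apply ENNReal.measurable_ofReal.comp
    apply Measurable.div measurable_const
    exact ((measurable_const.sub measurable_id).const_add a).pow_const 2
  rw [parMeasure, lintegral_withDensity_eq_lintegral_mul _ (parDens_meas a) hGmeas]
  have hsplit : (Ioi (1:ℝ)) = Ioc 1 (x/2-1) ∪ Ioi (x/2-1) := (Ioc_union_Ioi_eq_Ioi h1t).symm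
  rw [show (volume.restrict (Ioi (1:ℝ))) = volume.restrict (Ioc 1 (x/2-1) ∪ Ioi (x/2-1)) from by
    rw [← hsplit]]
  rw [lintegral_union measurableSet_Ioi (Ioc_disjoint_Ioi le_rfl)]
  have hA : ∫⁻ u in Ioc (1:ℝ) (x/2-1),
        ((fun y => ENNReal.ofReal (2*(a+1)^2/(a+y)^3)) * G) u
      = ENNReal.ofReal (∫ u in (1:ℝ)..(x/2-1), (a+1)^2/(a+x/2-u)^2 * (2*(a+1)^2/(a+u)^3)) := by
    have congrfun : ∀ u ∈ Ioc (1:ℝ) (x/2-1),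
        ((fun y => ENNReal.ofReal (2*(a+1)^2/(a+y)^3)) * G) u
          = ENNReal.ofReal ((a+1)^2/(a+x/2-u)^2 * (2*(a+1)^2/(a+u)^3)) := by
      intro u hu
      simp only [Pi.mul_apply]
      rw [hGdef]
      simp only [if_pos hu.2]
      have hw : (0:ℝ) < a + u := by linarith [hu.1]
      rw [← ENNReal.ofReal_mul (div_nonneg (by positivity) (pow_pos hw 3).le)]
      congr 1
      rw [show a + (x/2 - u) = a + x/2 - u from by ring]
      ring
    rw [setLIntegral_congr_fun measurableSet_Ioc congrfun]
    have hcont : ContinuousOn (fun u : ℝ => (a+1)^2/(a+x/2-u)^2 * (2*(a+1)^2/(a+u)^3))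
        (Icc 1 (x/2-1)) := by
      apply ContinuousOn.mul
      · apply continuousOn_const.div
        · fun_prop
        · intro u hu; rw [mem_Icc] at hu
          have : 0 < a + x/2 - u := by linarith
          positivity
      · apply continuousOn_const.div
        · fun_prop
        · intro u hu; rw [mem_Icc] at hu
          have : 0 < a + u := by linarith
          positivity
    have hint : IntegrableOn (fun u : ℝ => (a+1)^2/(a+x/2-u)^2 * (2*(a+1)^2/(a+u)^3))
        (Ioc 1 (x/2-1)) :=
      (hcont.integrableOn_Icc).mono_set Ioc_subset_Icc_self
    have hnn : 0 ≤ᵐ[volume.restrict (Ioc 1 (x/2-1))]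
        (fun u : ℝ => (a+1)^2/(a+x/2-u)^2 * (2*(a+1)^2/(a+u)^3)) := by
      filter_upwards [ae_restrict_mem measurableSet_Ioc] with u hu
      rw [mem_Ioc] at hu
      have hw : 0 < a + u := by linarith
      have hv : 0 < a + x/2 - u := by linarith
      positivity
    rw [← ofReal_integral_eq_lintegral_ofReal hint hnn, ← intervalIntegral.integral_of_le h1t]
  have hB : ∫⁻ u in Ioi (x/2-1),
        ((fun y => ENNReal.ofReal (2*(a+1)^2/(a+y)^3)) * G) u
      = ENNReal.ofReal ((a+1)^2/(a+(x/2-1))^2) := by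
    have congrfun2 : ∀ u ∈ Ioi (x/2-1),
        ((fun y => ENNReal.ofReal (2*(a+1)^2/(a+y)^3)) * G) u
          = ENNReal.ofReal (2*(a+1)^2/(a+u)^3) := by
      intro u hu
      simp only [Pi.mul_apply]
      rw [hGdef]
      simp only [if_neg (not_le.mpr (mem_Ioi.mp hu))]
      rw [mul_one]
    rw [setLIntegral_congr_fun measurableSet_Ioi congrfun2]
    have hpar : parMeasure a (Ioi (x/2-1))
        = ∫⁻ u in Ioi (x/2-1), ENNReal.ofReal (2*(a+1)^2/(a+u)^3) ∂volume := by
      rw [parMeasure, withDensity_apply _ measurableSet_Ioi,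
        Measure.restrict_restrict measurableSet_Ioi,
        inter_eq_left.mpr (Ioi_subset_Ioi (by linarith : (1:ℝ) ≤ x/2-1))]
    rw [← hpar, parMeasure_Ioi a _ ha0 h1t]
  rw [hA, hB]
  have hIntNN : 0 ≤ ∫ u in (1:ℝ)..(x/2-1), (a+1)^2/(a+x/2-u)^2 * (2*(a+1)^2/(a+u)^3) := by
    apply intervalIntegral.integral_nonneg h1t
    intro u hu
    rw [mem_Icc] at hu
    have hw : 0 < a + u := by linarith
    have hv : 0 < a + x/2 - u := by linarith
    positivity
  rw [← ENNReal.ofReal_add hIntNN (by positivity), key_integral a (x/2) ha0 h2t]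
  exact congrArg ENNReal.ofReal (final_algebra a x ha0 hx)
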